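/- Let A be a partial algebra with at least two elements and let A_0 be its one-point completion. Then every generating set of A^n is a generating set of A_0^n, and every generating set of A_0^n contains a generating set of A^n. Consequently d_{A_0}(n) = d_A(n) for all n. -/

import Mathlib

/-- An algebraic signature: a type of operation symbols with arities. -/
structure Sig where
  ops : Type
  arity : ops → ℕ

/-- An algebra of signature `σ` on carrier `α`. -/
structure Alg (σ : Sig) (α : Type) where
  interp : ∀ f : σ.ops, (Fin (σ.arity f) → α) → α

namespace Alg

variable {σ : Sig} {α : Type}

/-- The subuniverse generated by `G`. -/
inductive Gen (A : Alg σ α) (G : Set α) : α → Prop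
  | base {a : α} : a ∈ G → Gen A G a
  | app (f : σ.ops) (args : Fin (σ.arity f) → α) :
      (∀ i, Gen A G (args i)) → Gen A G (A.interp f args)

/-- `G` generates `A`. -/
def Generates (A : Alg σ α) (G : Set α) : Prop := ∀ a : α, A.Gen G a

/-- The `n`-th direct power of `A`, with operations acting coordinatewise. -/
def pow (A : Alg σ α) (n : ℕ) : Alg σ (Fin n → α) where
  interp f args := fun j => A.interp f fun i => args i j

/-- `A^n` is generated by some set of at most `g` elements. -/
def genBy (A : Alg σ α) (n g : ℕ) : Prop :=
  ∃ G : Finset (Fin n → α), G.card ≤ g ∧ (A.pow n).Generates ↑G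

/-- `d A n`: the least size of a generating set of `A^n`. -/
noncomputable def d (A : Alg σ α) (n : ℕ) : ℕ := sInf {g | A.genBy n g}

/-- `h A g`: the largest `n` such that `A^n` is `g`-generated. -/
noncomputable def h (A : Alg σ α) (g : ℕ) : ℕ := sSup {n | A.genBy n g}

end Alg

/-- A partial algebra of signature `σ` on carrier `α`: each operation has a
domain of definition, and `interp` is only meaningful on that domain. -/
structure PartialAlg (σ : Sig) (α : Type) where
  dom : ∀ f : σ.ops, Set (Fin (σ.arity f) → α)
  interp : ∀ f : σ.ops, (Fin (σ.arity f) → α) → α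

namespace PartialAlg

variable {σ : Sig} {α : Type}

/-- The subuniverse of a partial algebra generated by `G`. -/
inductive Gen (A : PartialAlg σ α) (G : Set α) : α → Prop
  | base {a : α} : a ∈ G → Gen A G a
  | app (f : σ.ops) (args : Fin (σ.arity f) → α) :
      args ∈ A.dom f → (∀ i, Gen A G (args i)) → Gen A G (A.interp f args)

/-- `G` generates the partial algebra `A`. -/
def Generates (A : PartialAlg σ α) (G : Set α) : Prop := ∀ a : α, A.Gen G a

/-- The `n`-th direct power of a partial algebra: an operation is defined on a
tuple of tuples iff it is defined in every coordinate, and acts coordinatewise. -/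
def pow (A : PartialAlg σ α) (n : ℕ) : PartialAlg σ (Fin n → α) where
  dom f := {args | ∀ j : Fin n, (fun i => args i j) ∈ A.dom f}
  interp f args := fun j => A.interp f fun i => args i j

/-- `d A n`: the least size of a generating set of `A^n` (partial algebra). -/
noncomputable def d (A : PartialAlg σ α) (n : ℕ) : ℕ :=
  sInf {g | ∃ G : Finset (Fin n → α), G.card ≤ g ∧ (A.pow n).Generates ↑G}

end PartialAlg

/-- The signature of the one-point completion: all symbols of `σ`, plus a
binary meet symbol. -/
def extSig (σ : Sig) : Sig where
  ops := σ.ops ⊕ Unit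
  arity := Sum.elim σ.arity (fun _ => 2)

/-- The one-point completion of a partial algebra: adjoin a new absorbing
element `none`, extend each partial operation by the value `none` off its
domain, and add the meet operation `a ∧ b = a` if `a = b`, else `none`. -/
noncomputable def PartialAlg.onePoint {σ : Sig} {α : Type}
    (A : PartialAlg σ α) : Alg (extSig σ) (Option α) where
  interp f :=
    match f with
    | Sum.inl f' => fun args =>
        letI := Classical.dec (∃ g : Fin (σ.arity f') → α,
          g ∈ A.dom f' ∧ ∀ i, args i = some (g i))
        if h : ∃ g : Fin (σ.arity f') → α,
            g ∈ A.dom f' ∧ ∀ i, args i = some (g i)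
        then some (A.interp f' h.choose)
        else none
    | Sum.inr _ => fun args =>
        letI := Classical.decEq (Option α)
        if args ⟨0, by simp [extSig]⟩ = args ⟨1, by simp [extSig]⟩ then args ⟨0, by simp [extSig]⟩ else none

section Aux

variable {σ : Sig} {α : Type}

/-- Index `0` for the meet operation. -/
def mi0 : Fin ((extSig σ).arity (Sum.inr ())) := ⟨0, by simp [extSig]⟩

/-- Index `1` for the meet operation. -/
def mi1 : Fin ((extSig σ).arity (Sum.inr ())) := ⟨1, by simp [extSig]⟩

lemma mi0_ne_mi1 : (mi0 : Fin ((extSig σ).arity (Sum.inr ()))) ≠ mi1 := by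
  intro h
  have := congrArg Fin.val h
  simp [mi0, mi1] at this

lemma op_interp_some (A : PartialAlg σ α) (f : σ.ops) (w : Fin (σ.arity f) → α)
    (hw : w ∈ A.dom f) :
    A.onePoint.interp (Sum.inl f) (fun i => some (w i)) = some (A.interp f w) := by
  simp only [PartialAlg.onePoint]
  split
  next hex =>
    have hcw : hex.choose = w := by
      funext i
      exact (Option.some_injective α (hex.choose_spec.2 i)).symm
    rw [hcw]
  next hex =>
    exact absurd ⟨w, hw, fun _ => rfl⟩ hex

lemma op_interp_eq_some (A : PartialAlg σ α) {f : σ.ops}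
    {v : Fin (σ.arity f) → Option α} {x : α}
    (h : A.onePoint.interp (Sum.inl f) v = some x) :
    ∃ w, w ∈ A.dom f ∧ (∀ i, v i = some (w i)) ∧ A.interp f w = x := by
  simp only [PartialAlg.onePoint] at h
  split at h
  next hex =>
    exact ⟨hex.choose, hex.choose_spec.1, hex.choose_spec.2,
      Option.some_injective α h⟩
  next =>
    exact absurd h (by simp)

lemma meet_interp_eq_self (A : PartialAlg σ α)
    (v : Fin ((extSig σ).arity (Sum.inr ())) → Option α) (h : v mi0 = v mi1) :
    A.onePoint.interp (Sum.inr ()) v = v mi0 := by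
  simp only [PartialAlg.onePoint]
  split
  · rfl
  · exact absurd h ‹_›

lemma meet_interp_eq_none (A : PartialAlg σ α)
    (v : Fin ((extSig σ).arity (Sum.inr ())) → Option α) (h : v mi0 ≠ v mi1) :
    A.onePoint.interp (Sum.inr ()) v = none := by
  simp only [PartialAlg.onePoint]
  split
  · exact absurd ‹_› h
  · rfl

lemma meet_interp_eq_some (A : PartialAlg σ α)
    {v : Fin ((extSig σ).arity (Sum.inr ())) → Option α} {x : α}
    (h : A.onePoint.interp (Sum.inr ()) v = some x) :
    v mi0 = some x ∧ v mi1 = some x := by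
  by_cases hv : v mi0 = v mi1
  · rw [meet_interp_eq_self A v hv] at h
    exact ⟨h, hv ▸ h⟩
  · rw [meet_interp_eq_none A v hv] at h
    exact absurd h (by simp)

lemma gen_up (A : PartialAlg σ α) (n : ℕ) (G : Set (Fin n → α)) {g : Fin n → α}
    (hg : (A.pow n).Gen G g) :
    (A.onePoint.pow n).Gen ((fun g (j : Fin n) => some (g j)) '' G)
      (fun j => some (g j)) := by
  induction hg with
  | base h => exact .base ⟨_, h, rfl⟩
  | app f args hdom hargs ih =>
    have key : (fun j => some ((A.pow n).interp f args j)) =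
        (A.onePoint.pow n).interp (Sum.inl f) (fun i j => some (args i j)) := by
      funext j
      exact (op_interp_some A f (fun i => args i j) (hdom j)).symm
    rw [key]
    exact Alg.Gen.app (A := A.onePoint.pow n) (Sum.inl f) (fun i j => some (args i j)) (fun i => ih i)

lemma gen_up_all (A : PartialAlg σ α) [Nontrivial α] (n : ℕ)
    (G : Set (Fin n → α)) (hG : (A.pow n).Generates G) :
    (A.onePoint.pow n).Generates ((fun g (j : Fin n) => some (g j)) '' G) := by
  intro h
  obtain ⟨a, b, hab⟩ := exists_pair_ne α
  set g₁ : Fin n → α := fun j => (h j).getD a with hg₁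
  set g₂ : Fin n → α := fun j => (h j).getD b with hg₂
  set args : Fin ((extSig σ).arity (Sum.inr ())) → Fin n → Option α :=
    fun i => if i = mi0 then (fun j => some (g₁ j)) else (fun j => some (g₂ j))
    with hargsdef
  have hv0 : args mi0 = fun j => some (g₁ j) := if_pos rfl
  have hv1 : args mi1 = fun j => some (g₂ j) := if_neg (Ne.symm mi0_ne_mi1)
  have key : h = (A.onePoint.pow n).interp (Sum.inr ()) args := by
    funext j
    show h j = A.onePoint.interp (Sum.inr ()) (fun i => args i j)
    cases hj : h j with
    | some x =>
      have e0 : args mi0 j = some x := by rw [hv0]; simp [hg₁, hj]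
      have e1 : args mi1 j = some x := by rw [hv1]; simp [hg₂, hj]
      rw [meet_interp_eq_self A (fun i => args i j) (e0.trans e1.symm)]
      exact e0.symm
    | none =>
      have e0 : args mi0 j = some a := by rw [hv0]; simp [hg₁, hj]
      have e1 : args mi1 j = some b := by rw [hv1]; simp [hg₂, hj]
      have hne : args mi0 j ≠ args mi1 j := by
        rw [e0, e1]; simpa using hab
      rw [meet_interp_eq_none A (fun i => args i j) hne]
  rw [key]
  refine Alg.Gen.app (A := A.onePoint.pow n) (Sum.inr ()) args fun i => ?_
  by_cases hi : i = mi0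
  · rw [hi, hv0]; exact gen_up A n G (hG g₁)
  · rw [show args i = fun j => some (g₂ j) from if_neg hi]
    exact gen_up A n G (hG g₂)

lemma gen_down (A : PartialAlg σ α) (n : ℕ) (H : Set (Fin n → Option α))
    {h : Fin n → Option α} (hg : (A.onePoint.pow n).Gen H h) :
    ∀ g : Fin n → α, h = (fun j => some (g j)) →
      (A.pow n).Gen {g : Fin n → α | (fun j => some (g j)) ∈ H} g := by
  induction hg with
  | base hH =>
    intro g he
    refine .base ?_
    show (fun j => some (g j)) ∈ H
    rw [← he]; exact hH
  | app f args hargs ih =>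
    intro g he
    match f, args, hargs, ih, he with
    | Sum.inl f', args, hargs, ih, he =>
      have he' : ∀ j, A.onePoint.interp (Sum.inl f') (fun i => args i j) = some (g j) :=
        fun j => congrFun he j
      have hP : ∀ j, ∃ w, w ∈ A.dom f' ∧ (∀ i, args i j = some (w i)) ∧
          A.interp f' w = g j := by
        intro j
        exact op_interp_eq_some A (he' j)
      have hargs_eq : ∀ i, args i = fun j => some ((hP j).choose i) :=
        fun i => funext fun j => (hP j).choose_spec.2.1 i
      have hdom : (fun i j => (hP j).choose i) ∈ (A.pow n).dom f' :=
        fun j => (hP j).choose_spec.1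
      have hgeq : g = (A.pow n).interp f' (fun i j => (hP j).choose i) :=
        funext fun j => ((hP j).choose_spec.2.2).symm
      rw [hgeq]
      exact .app f' _ hdom (fun i => ih i _ (hargs_eq i))
    | Sum.inr u, args, hargs, ih, he =>
      have he' : ∀ j, A.onePoint.interp (Sum.inr ()) (fun i => args i j) = some (g j) :=
        fun j => congrFun he j
      have h0 : args mi0 = fun j => some (g j) := by
        funext j
        exact (meet_interp_eq_some A (he' j)).1
      exact ih mi0 g h0

end Aux

/-- for a partial algebra `A` with at least two elements and its
one-point completion `A₀`: every generating set of `A^n` generates `A₀^n`,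
every generating set of `A₀^n` contains a generating set of `A^n` (the tuples
of the generating set that lie in `A^n` already generate `A^n`), and
consequently `d_{A₀}(n) = d_A(n)` for all `n`. -/
theorem stmt_10 (σ : Sig) (α : Type) [Nontrivial α] (A : PartialAlg σ α) :
    ∀ n : ℕ,
      (∀ G : Set (Fin n → α), (A.pow n).Generates G →
        (A.onePoint.pow n).Generates ((fun g (j : Fin n) => some (g j)) '' G)) ∧
      (∀ H : Set (Fin n → Option α), (A.onePoint.pow n).Generates H →
        (A.pow n).Generates {g : Fin n → α | (fun j => some (g j)) ∈ H}) ∧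
      A.onePoint.d n = A.d n := by
  intro n
  have hinj : Function.Injective (fun (g : Fin n → α) (j : Fin n) => some (g j)) :=
    fun g g' hgg => funext fun j => Option.some_injective α (congrFun hgg j)
  refine ⟨fun G hG => gen_up_all A n G hG, ?_, ?_⟩
  · intro H hH g
    exact gen_down A n H (hH (fun j => some (g j))) g rfl
  · classical
    unfold Alg.d PartialAlg.d
    congr 1
    ext k
    simp only [Set.mem_setOf_eq, Alg.genBy]
    constructor
    · rintro ⟨H, hcard, hgen⟩
      refine ⟨H.preimage (fun g (j : Fin n) => some (g j)) hinj.injOn, ?_, ?_⟩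
      · exact le_trans
          (Finset.card_le_card_of_injOn _
            (fun a ha => Finset.mem_preimage.mp ha) hinj.injOn) hcard
      · rw [Finset.coe_preimage]
        intro g
        exact gen_down A n ↑H (hgen (fun j => some (g j))) g rfl
    · rintro ⟨G, hcard, hgen⟩
      refine ⟨G.image (fun g (j : Fin n) => some (g j)), le_trans Finset.card_image_le hcard, ?_⟩
      rw [Finset.coe_image]
      exact gen_up_all A n ↑G hgen
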